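/- For a biased simple random walk starting at 1 that moves left by 1 with probability x and right by 1 with probability 1-x at each step (independently), the probability of ever reaching 0 equals min(1, x/(1-x)) for x ∈ (0, 1). -/
import Mathlib

/-- Position of the walk after `t` steps: start at 1; each `true` step moves left by 1,
each `false` step moves right by 1. -/
def walkPos (j : ℕ) (ω : Fin j → Bool) (t : ℕ) : ℤ :=
  1 + ∑ i ∈ Finset.univ.filter (fun i : Fin j => (i : ℕ) < t),
    (if ω i then (-1 : ℤ) else 1)

/-- The walk reaches 0 within `j` steps. -/
def hitsZero (j : ℕ) (ω : Fin j → Bool) : Prop := ∃ t ≤ j, walkPos j ω t = 0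

open Classical in
/-- Probability that the walk with independent left-probabilities `p i` hits 0 within
`j` steps. -/
noncomputable def walkHitProb (j : ℕ) (p : Fin j → ℝ) : ℝ :=
  ∑ ω : Fin j → Bool, (∏ i, if ω i then p i else 1 - p i) *
    (if hitsZero j ω then (1 : ℝ) else 0)

/-- f_j(x): probability that the biased walk (left with probability x) started at 1
hits 0 within j steps. -/
noncomputable def fstep (j : ℕ) (x : ℝ) : ℝ := walkHitProb j (fun _ => x)

/-! ### Auxiliary development -/

/-- Hitting probability from height `h` within `j` steps: recursion. -/
noncomputable def gw (x : ℝ) : ℕ → ℕ → ℝ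
  | _, 0 => 1
  | 0, _ + 1 => 0
  | j + 1, h + 1 => x * gw x j h + (1 - x) * gw x j (h + 2)

variable {x : ℝ}

lemma gw_zero (x : ℝ) (j : ℕ) : gw x j 0 = 1 := by cases j <;> rfl

lemma gw_succ (x : ℝ) (j h : ℕ) :
    gw x (j + 1) (h + 1) = x * gw x j h + (1 - x) * gw x j (h + 2) := rfl

lemma gw_zero_succ (x : ℝ) (h : ℕ) : gw x 0 (h + 1) = 0 := rfl

lemma gw_nonneg (hx0 : 0 < x) (hx1 : x < 1) : ∀ j h, 0 ≤ gw x j h := by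
  intro j
  induction j with
  | zero => intro h; cases h <;> simp [gw_zero, gw_zero_succ]
  | succ j ih =>
    intro h
    cases h with
    | zero => simp [gw_zero]
    | succ h =>
      rw [gw_succ]
      have := ih h
      have := ih (h + 2)
      nlinarith

lemma gw_le_one (hx0 : 0 < x) (hx1 : x < 1) : ∀ j h, gw x j h ≤ 1 := by
  intro j
  induction j with
  | zero => intro h; cases h <;> simp [gw_zero, gw_zero_succ]
  | succ j ih =>
    intro h
    cases h with
    | zero => simp [gw_zero]
    | succ h =>
      rw [gw_succ]
      have := ih h
      have := ih (h + 2)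
      nlinarith

lemma gw_mono (hx0 : 0 < x) (hx1 : x < 1) : ∀ j h, gw x j h ≤ gw x (j + 1) h := by
  intro j
  induction j with
  | zero =>
    intro h
    cases h with
    | zero => simp [gw_zero]
    | succ h =>
      rw [gw_zero_succ, gw_succ]
      have := gw_nonneg hx0 hx1 0 h
      have := gw_nonneg hx0 hx1 0 (h + 2)
      nlinarith
  | succ j ih =>
    intro h
    cases h with
    | zero => simp [gw_zero]
    | succ h =>
      rw [gw_succ, gw_succ]
      have := ih h
      have := ih (h + 2)
      nlinarith

lemma gw_mono' (hx0 : 0 < x) (hx1 : x < 1) (h : ℕ) : Monotone (fun j => gw x j h) :=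
  monotone_nat_of_le_succ fun j => gw_mono hx0 hx1 j h

lemma gw_super (hx0 : 0 < x) (hx1 : x < 1) (b k : ℕ) :
    ∀ a h, gw x a h * gw x b k ≤ gw x (a + b) (h + k) := by
  intro a
  induction a with
  | zero =>
    intro h
    cases h with
    | zero => simp [gw_zero]
    | succ h => simp [gw_zero_succ, gw_nonneg hx0 hx1]
  | succ a ih =>
    intro h
    cases h with
    | zero =>
      simp only [gw_zero, one_mul, Nat.zero_add]
      exact gw_mono' hx0 hx1 k (by omega : b ≤ a + 1 + b)
    | succ h =>
      have e1 : a + 1 + b = (a + b) + 1 := by omega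
      have e2 : h + 1 + k = (h + k) + 1 := by omega
      rw [e1, e2, gw_succ, gw_succ]
      have i1 := ih h
      have i2 := ih (h + 2)
      have e3 : h + 2 + k = h + k + 2 := by omega
      rw [e3] at i2
      have hb := gw_nonneg hx0 hx1 b k
      nlinarith

lemma gw_sub (hx0 : 0 < x) (hx1 : x < 1) (k : ℕ) :
    ∀ j h, gw x j (h + k) ≤ gw x j h * gw x j k := by
  intro j
  induction j with
  | zero =>
    intro h
    cases h with
    | zero => simp [gw_zero]
    | succ h =>
      have e : h + 1 + k = (h + k) + 1 := by omega
      rw [e, gw_zero_succ, gw_zero_succ]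
      simp [gw_nonneg hx0 hx1]
  | succ j ih =>
    intro h
    cases h with
    | zero => simp [gw_zero]
    | succ h =>
      have e : h + 1 + k = (h + k) + 1 := by omega
      rw [e, gw_succ, gw_succ]
      have i1 := ih h
      have i2 := ih (h + 2)
      have e2 : h + 2 + k = h + k + 2 := by omega
      rw [e2] at i2
      have hk1 : gw x j k ≤ gw x (j + 1) k := gw_mono hx0 hx1 j k
      have h1 : 0 ≤ gw x j k := gw_nonneg hx0 hx1 j k
      have h2 : 0 ≤ gw x j h := gw_nonneg hx0 hx1 j h
      have h3 : 0 ≤ gw x j (h + 2) := gw_nonneg hx0 hx1 j (h + 2)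
      have h4 : 0 ≤ x * gw x j h + (1 - x) * gw x j (h + 2) := by nlinarith
      nlinarith [mul_le_mul_of_nonneg_left hk1 h4]

/-- Upper bound by powers of `m = min 1 (x/(1-x))`. -/
lemma gw_le_pow (hx0 : 0 < x) (hx1 : x < 1) :
    ∀ j h, gw x j h ≤ (min 1 (x / (1 - x))) ^ h := by
  have hx1' : 0 < 1 - x := by linarith
  set m := min 1 (x / (1 - x)) with hm
  have hm0 : 0 ≤ m := le_min (by norm_num) (by positivity)
  have hmfix : x + (1 - x) * m ^ 2 = m := by
    rcases le_total (x / (1 - x)) 1 with hle | hle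
    · rw [hm, min_eq_right hle]
      field_simp
      ring
    · rw [hm, min_eq_left hle]
      ring
  intro j
  induction j with
  | zero =>
    intro h
    cases h with
    | zero => simp [gw_zero]
    | succ h => rw [gw_zero_succ]; positivity
  | succ j ih =>
    intro h
    cases h with
    | zero => simp [gw_zero]
    | succ h =>
      rw [gw_succ]
      have i1 := ih h
      have i2 := ih (h + 2)
      have hp : (0:ℝ) ≤ m ^ h := by positivity
      calc x * gw x j h + (1 - x) * gw x j (h + 2)
          ≤ x * m ^ h + (1 - x) * m ^ (h + 2) := by
            have := mul_le_mul_of_nonneg_left i1 hx0.le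
            have := mul_le_mul_of_nonneg_left i2 hx1'.le
            linarith
        _ = m ^ h * (x + (1 - x) * m ^ 2) := by ring
        _ = m ^ h * m := by rw [hmfix]
        _ = m ^ (h + 1) := by ring

/-! ### Cube sums equal the recursion -/

open Classical in
noncomputable def hitsFrom (s : ℤ) (j : ℕ) (ω : Fin j → Bool) : Prop :=
  ∃ t ≤ j, s + ∑ i ∈ Finset.univ.filter (fun i : Fin j => (i : ℕ) < t),
    (if ω i then (-1 : ℤ) else 1) = 0

open Classical in
noncomputable def cubeP (x : ℝ) (j : ℕ) (s : ℤ) : ℝ :=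
  ∑ ω : Fin j → Bool, (∏ i, if ω i then x else 1 - x) *
    (if hitsFrom s j ω then (1 : ℝ) else 0)

lemma cube_split (j : ℕ) (F : (Fin (j+1) → Bool) → ℝ) :
    ∑ ω : Fin (j+1) → Bool, F ω
      = ∑ b : Bool, ∑ ω : Fin j → Bool, F (Fin.cons b ω) := by
  calc ∑ ω : Fin (j+1) → Bool, F ω
      = ∑ p : Bool × (Fin j → Bool), F (Fin.cons p.1 p.2) :=
        (Fintype.sum_equiv (Fin.consEquiv (fun _ => Bool))
          (fun p => F (Fin.cons p.1 p.2)) F (fun p => rfl)).symm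
    _ = ∑ b : Bool, ∑ ω : Fin j → Bool, F (Fin.cons b ω) := Fintype.sum_prod_type _

lemma partial_sum_succ (j : ℕ) (b : Bool) (ω : Fin j → Bool) (t : ℕ) :
    ∑ i ∈ Finset.univ.filter (fun i : Fin (j+1) => (i : ℕ) < t + 1),
      (if (Fin.cons (α := fun _ => Bool) b ω i) then (-1 : ℤ) else 1)
    = (if b then (-1 : ℤ) else 1) +
      ∑ i ∈ Finset.univ.filter (fun i : Fin j => (i : ℕ) < t),
        (if ω i then (-1 : ℤ) else 1) := by
  rw [Finset.sum_filter, Finset.sum_filter, Fin.sum_univ_succ]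
  simp [Fin.cons_zero, Fin.cons_succ, Nat.succ_lt_succ_iff]

lemma hitsFrom_succ (s : ℤ) (j : ℕ) (b : Bool) (ω : Fin j → Bool) :
    hitsFrom s (j+1) (Fin.cons b ω)
      ↔ s = 0 ∨ hitsFrom (s + if b then (-1 : ℤ) else 1) j ω := by
  classical
  constructor
  · rintro ⟨t, ht, hsum⟩
    cases t with
    | zero =>
      left
      simpa [hitsFrom] using hsum
    | succ t =>
      right
      refine ⟨t, by omega, ?_⟩
      rw [partial_sum_succ] at hsum
      linarith
  · rintro (hs | ⟨t, ht, hsum⟩)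
    · exact ⟨0, by omega, by simpa using hs⟩
    · refine ⟨t + 1, by omega, ?_⟩
      rw [partial_sum_succ]
      linarith

lemma cons_weight (x : ℝ) (j : ℕ) (b : Bool) (ω : Fin j → Bool) :
    (∏ i : Fin (j+1), if (Fin.cons (α := fun _ => Bool) b ω i) then x else 1 - x)
      = (if b then x else 1 - x) * ∏ i, if ω i then x else 1 - x := by
  rw [Fin.prod_univ_succ]
  simp [Fin.cons_zero, Fin.cons_succ]

lemma sum_weights (x : ℝ) : ∀ j : ℕ,
    ∑ ω : Fin j → Bool, (∏ i, if ω i then x else 1 - x) = 1 := by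
  intro j
  induction j with
  | zero => simp
  | succ j ih =>
    rw [cube_split j (fun ω => ∏ i, if ω i then x else 1 - x)]
    simp only [cons_weight, ← Finset.mul_sum, ih]
    simp

open Classical in
lemma cubeP_succ (x : ℝ) (j : ℕ) (s : ℤ) :
    cubeP x (j+1) s = if s = 0 then 1
      else x * cubeP x j (s - 1) + (1 - x) * cubeP x j (s + 1) := by
  classical
  rw [cubeP, cube_split j (fun ω => (∏ i, if ω i then x else 1 - x) *
    (if hitsFrom s (j+1) ω then (1 : ℝ) else 0))]
  by_cases hs : s = 0
  · subst hs
    simp only [if_pos rfl]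
    have : ∀ b : Bool, ∀ ω : Fin j → Bool,
        (if hitsFrom (0 : ℤ) (j+1) (Fin.cons b ω) then (1:ℝ) else 0) = 1 := by
      intro b ω
      rw [if_pos]
      rw [hitsFrom_succ]
      exact Or.inl rfl
    simp only [cons_weight, this, mul_one, ← Finset.mul_sum, sum_weights]
    rw [Fintype.sum_bool]
    norm_num
  · rw [if_neg hs]
    have key : ∀ b : Bool, ∀ ω : Fin j → Bool,
        (if hitsFrom s (j+1) (Fin.cons b ω) then (1:ℝ) else 0)
          = (if hitsFrom (s + if b then (-1:ℤ) else 1) j ω then (1:ℝ) else 0) := by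
      intro b ω
      rw [hitsFrom_succ]
      simp [hs]
    simp only [cons_weight, key, mul_assoc, ← Finset.mul_sum]
    rw [Fintype.sum_bool]
    have e1 : s + (-1 : ℤ) = s - 1 := by ring
    simp only [if_true, if_false, cubeP, e1]
    norm_num

lemma cubeP_zero (x : ℝ) (s : ℤ) :
    cubeP x 0 s = if s = 0 then 1 else 0 := by
  classical
  simp [cubeP, hitsFrom]

lemma cubeP_eq_gw (x : ℝ) : ∀ j (h : ℕ), cubeP x j (h : ℤ) = gw x j h := by
  intro j
  induction j with
  | zero =>
    intro h
    cases h with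
    | zero => simp [cubeP_zero, gw_zero]
    | succ h =>
      rw [cubeP_zero, gw_zero_succ, if_neg]
      exact_mod_cast Nat.succ_ne_zero h
  | succ j ih =>
    intro h
    cases h with
    | zero => simp [cubeP_succ, gw_zero]
    | succ h =>
      rw [cubeP_succ, if_neg (by exact_mod_cast Nat.succ_ne_zero h), gw_succ]
      have e1 : ((h + 1 : ℕ) : ℤ) - 1 = (h : ℤ) := by push_cast; ring
      have e2 : ((h + 1 : ℕ) : ℤ) + 1 = ((h + 2 : ℕ) : ℤ) := by push_cast; ring
      rw [e1, e2, ih h, ih (h + 2)]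

lemma fstep_eq_gw (j : ℕ) (x : ℝ) : fstep j x = gw x j 1 := by
  have : fstep j x = cubeP x j 1 := rfl
  rw [this]
  exact_mod_cast cubeP_eq_gw x j 1

/-- For the biased random walk starting at 1 moving left with probability x ∈ (0,1),
the probability of ever reaching 0 (the limit of the j-step hitting probabilities)
equals min(1, x/(1-x)). -/
theorem walk_hitting_probability (x : ℝ) (hx0 : 0 < x) (hx1 : x < 1) :
    Filter.Tendsto (fun j => fstep j x) Filter.atTop (nhds (min 1 (x / (1 - x)))) := by
  have hx1' : 0 < 1 - x := by linarith
  set m := min 1 (x / (1 - x)) with hm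
  set L1 := ⨆ j, gw x j 1 with hL1
  set L2 := ⨆ j, gw x j 2 with hL2
  have bdd1 : BddAbove (Set.range fun j => gw x j 1) :=
    ⟨1, by rintro _ ⟨j, rfl⟩; exact gw_le_one hx0 hx1 j 1⟩
  have bdd2 : BddAbove (Set.range fun j => gw x j 2) :=
    ⟨1, by rintro _ ⟨j, rfl⟩; exact gw_le_one hx0 hx1 j 2⟩
  have t1 : Filter.Tendsto (fun j => gw x j 1) Filter.atTop (nhds L1) :=
    tendsto_atTop_ciSup (gw_mono' hx0 hx1 1) bdd1
  have t2 : Filter.Tendsto (fun j => gw x j 2) Filter.atTop (nhds L2) :=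
    tendsto_atTop_ciSup (gw_mono' hx0 hx1 2) bdd2
  -- L1 = x + (1-x) * L2
  have eq1 : L1 = x + (1 - x) * L2 := by
    have ha : Filter.Tendsto (fun j => gw x (j + 1) 1) Filter.atTop (nhds L1) :=
      t1.comp (Filter.tendsto_add_atTop_nat 1)
    have hb : Filter.Tendsto (fun j => x + (1 - x) * gw x j 2) Filter.atTop
        (nhds (x + (1 - x) * L2)) :=
      (tendsto_const_nhds.add (tendsto_const_nhds.mul t2))
    have heq : (fun j => gw x (j + 1) 1) = fun j => x + (1 - x) * gw x j 2 := by
      funext j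
      rw [show (1 : ℕ) = 0 + 1 from rfl, gw_succ, gw_zero]
      ring
    rw [heq] at ha
    exact tendsto_nhds_unique ha hb
  -- L2 = L1 * L1
  have le1 : L2 ≤ L1 * L1 := by
    refine le_of_tendsto_of_tendsto' t2 (t1.mul t1) fun j => ?_
    exact gw_sub hx0 hx1 1 j 1
  have ge1 : L1 * L1 ≤ L2 := by
    have hdouble : Filter.Tendsto (fun j : ℕ => j + j) Filter.atTop Filter.atTop :=
      Filter.tendsto_atTop_mono (fun j => Nat.le_add_left j j) Filter.tendsto_id
    refine le_of_tendsto_of_tendsto' (t1.mul t1) (t2.comp hdouble) fun j => ?_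
    exact gw_super hx0 hx1 j 1 j 1
  have eq2 : L2 = L1 * L1 := le_antisymm le1 ge1
  -- L1 ≤ m
  have hL1m : L1 ≤ m := by
    refine ciSup_le fun j => ?_
    have := gw_le_pow hx0 hx1 j 1
    rwa [pow_one] at this
  -- solve the quadratic
  have hquad : (L1 - 1) * ((1 - x) * L1 - x) = 0 := by
    rw [eq2] at eq1
    nlinarith [eq1]
  have hL1 : L1 = m := by
    rcases mul_eq_zero.1 hquad with h | h
    · have h1 : L1 = 1 := by linarith
      have : m ≤ 1 := min_le_left _ _
      rw [hm] at *
      linarith [hL1m]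
    · have h1 : L1 = x / (1 - x) := by
        field_simp
        linarith
      have : m ≤ x / (1 - x) := min_le_right _ _
      linarith [hL1m]
  have : (fun j => fstep j x) = fun j => gw x j 1 := funext fun j => fstep_eq_gw j x
  rw [this, ← hL1]
  exact t1
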